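/- Let n > 6 be an integer and write n = 4q + r with r ∈ {0,1,2,3}. Among all partitions of n into parts ≥ 2, the value ∑_i C_{n_i} (with C_j = H_{j-1,1}^2/H_{j-1,2}) is maximized by: q parts of size 4 if r = 0; (q−r) parts of size 4 and r parts of size 5 if r ∈ {1,2}; q parts of size 4 and one part of size 3 if r = 3. -/

import Mathlib

noncomputable def H (m j : ℕ) : ℝ := ∑ i ∈ Finset.Icc 1 m, (1 : ℝ) / (i : ℝ) ^ j

noncomputable def C (n : ℕ) : ℝ := (H (n - 1) 1) ^ 2 / H (n - 1) 2

def optimalPartition (q r : ℕ) : Multiset ℕ :=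
  if r = 0 then Multiset.replicate q 4
  else if r ≤ 2 then Multiset.replicate (q - r) 4 + Multiset.replicate r 5
  else Multiset.replicate q 4 + {3}

lemma H_succ (m j : ℕ) : H (m+1) j = H m j + 1/((m:ℝ)+1)^j := by
  rw [H, H, ← Finset.insert_Icc_right_eq_Icc_add_one (by omega), Finset.sum_insert (by simp)]
  push_cast; ring

lemma H_eq (m j : ℕ) : H m j = ∑ i ∈ Finset.range m, (1:ℝ)/((i:ℝ)+1)^j := by
  induction m with
  | zero => simp [H]
  | succ n ih => rw [H_succ, ih, Finset.sum_range_succ]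

lemma H_nonneg (m j : ℕ) : 0 ≤ H m j := by
  rw [H_eq]; exact Finset.sum_nonneg fun i _ => by positivity

lemma H_mono {m m' : ℕ} (h : m ≤ m') (j : ℕ) : H m j ≤ H m' j := by
  rw [H_eq, H_eq]
  exact Finset.sum_le_sum_of_subset_of_nonneg (Finset.range_subset_range.2 h)
    (fun i _ _ => by positivity)

lemma H2_ge_one {m : ℕ} (h : 1 ≤ m) : 1 ≤ H m 2 := by
  calc (1:ℝ) = H 1 2 := by rw [H_eq]; norm_num
  _ ≤ H m 2 := H_mono h 2

/-- linear bound on harmonic numbers -/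
lemma H_lin : ∀ m : ℕ, 15 ≤ m → H m 1 ≤ 3/10 * m - 1 := by
  intro m hm
  induction m, hm using Nat.le_induction with
  | base => rw [H_eq]; norm_num [Finset.sum_range_succ]
  | succ n hn ih =>
      rw [H_succ]
      have h1 : (1:ℝ)/((n:ℝ)+1) ≤ 3/10 := by
        rw [div_le_iff₀ (by positivity)]
        have : (15:ℝ) ≤ n := by exact_mod_cast hn
        linarith
      push_cast
      simp only [pow_one]
      linarith

noncomputable def cc : ℕ → ℝ
  | 0 => 0
  | 1 => 125/41 - 121/49
  | 2 => 2*(125/41) - 2*(121/49)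
  | _ => 9/5

noncomputable def g (n : ℕ) : ℝ := (n / 4 : ℕ) * (121/49) + cc (n % 4)

lemma g_eq (q r : ℕ) (h : r < 4) : g (4*q+r) = q * (121/49) + cc r := by
  have h1 : (4*q+r)/4 = q := by omega
  have h2 : (4*q+r)%4 = r := by omega
  rw [g, h1, h2]

lemma g_superadd (a b : ℕ) : g a + g b ≤ g (a+b) := by
  obtain ⟨qa, ra, hra, rfl⟩ : ∃ q r, r < 4 ∧ a = 4*q + r :=
    ⟨a/4, a%4, Nat.mod_lt _ (by norm_num), by omega⟩
  obtain ⟨qb, rb, hrb, rfl⟩ : ∃ q r, r < 4 ∧ b = 4*q + r :=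
    ⟨b/4, b%4, Nat.mod_lt _ (by norm_num), by omega⟩
  have h : 4*qa+ra+(4*qb+rb) = 4*(qa+qb+(ra+rb)/4) + (ra+rb)%4 := by omega
  rw [g_eq _ _ hra, g_eq _ _ hrb, h, g_eq _ _ (by omega)]
  push_cast
  interval_cases ra <;> interval_cases rb <;> norm_num [cc] <;> nlinarith []

lemma C3 : C 3 = 9/5 := by
  rw [C]; norm_num [H_eq, Finset.sum_range_succ]
lemma C4 : C 4 = 121/49 := by
  rw [C]; norm_num [H_eq, Finset.sum_range_succ]
lemma C5 : C 5 = 125/41 := by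
  rw [C]; norm_num [H_eq, Finset.sum_range_succ]

/-- the key analytic step -/
lemma C_step (k : ℕ) (hk : 7 ≤ k) : C (k+9) ≤ C (k+5) + 121/49 := by
  have e1 : C (k+9) = (H (k+8) 1)^2 / H (k+8) 2 := rfl
  have e2 : C (k+5) = (H (k+4) 1)^2 / H (k+4) 2 := rfl
  set a := H (k+4) 1 with ha
  set b := H (k+8) 1 with hb
  have hba : b - a ≤ 4 / ((k:ℝ)+5) := by
    have hexp : b = a + 1/((k:ℝ)+5) + 1/((k:ℝ)+6) + 1/((k:ℝ)+7) + 1/((k:ℝ)+8) := by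
      rw [hb, ha]
      rw [show k+8 = (k+7)+1 from rfl, H_succ, show k+7 = (k+6)+1 from rfl, H_succ,
        show k+6 = (k+5)+1 from rfl, H_succ, show k+5 = (k+4)+1 from rfl, H_succ]
      push_cast; ring
    have hk5 : (0:ℝ) < (k:ℝ)+5 := by positivity
    have l1 : 1/((k:ℝ)+6) ≤ 1/((k:ℝ)+5) := by
      apply one_div_le_one_div_of_le hk5; linarith
    have l2 : 1/((k:ℝ)+7) ≤ 1/((k:ℝ)+5) := by
      apply one_div_le_one_div_of_le hk5; linarith
    have l3 : 1/((k:ℝ)+8) ≤ 1/((k:ℝ)+5) := by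
      apply one_div_le_one_div_of_le hk5; linarith
    have l4 : (4:ℝ)/((k:ℝ)+5) = 4*(1/((k:ℝ)+5)) := by ring
    rw [hexp, l4]; linarith
  have hab : a ≤ b := H_mono (by omega) 1
  have ha0 : 0 ≤ a := H_nonneg _ _
  have hblin : b ≤ 3/10 * ((k:ℝ)+8) - 1 := by
    have := H_lin (k+8) (by omega)
    push_cast at this ⊢; linarith
  have h2m : H (k+4) 2 ≤ H (k+8) 2 := H_mono (by omega) 2
  have h21 : 1 ≤ H (k+4) 2 := H2_ge_one (by omega)
  have h21' : 1 ≤ H (k+8) 2 := H2_ge_one (by omega)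
  rw [e1, e2]
  have key : b^2 - a^2 ≤ 121/49 := by
    have hk' : (7:ℝ) ≤ k := by exact_mod_cast hk
    have h1 : b^2 - a^2 = (b+a)*(b-a) := by ring
    have h2 : (b+a)*(b-a) ≤ (2*b) * (4/((k:ℝ)+5)) := by
      apply mul_le_mul (by linarith) hba (by linarith) (by linarith)
    have h3 : (2*b) * (4/((k:ℝ)+5)) ≤ 121/49 := by
      have e : 2*b*(4/((k:ℝ)+5)) = 8*b/((k:ℝ)+5) := by ring
      rw [e, div_le_div_iff₀ (by positivity) (by norm_num)]
      linarith
    linarith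
  have hd : (b^2 - a^2)/H (k+8) 2 ≤ b^2 - a^2 :=
    div_le_self (by nlinarith) h21'
  have hsplit : b^2/H (k+8) 2 = a^2/H (k+8) 2 + (b^2-a^2)/H (k+8) 2 := by ring
  have step2 : a^2 / H (k+8) 2 ≤ a^2 / H (k+4) 2 := by
    apply div_le_div_of_nonneg_left (by positivity) (by linarith) h2m
  linarith

lemma g4_eq : g 4 = 121/49 := by
  rw [show (4:ℕ)=4*1+0 from rfl, g_eq 1 0 (by norm_num)]
  norm_num [cc]

lemma C_le_g : ∀ x : ℕ, 2 ≤ x → C x ≤ g x := by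
  intro x
  induction x using Nat.strong_induction_on with
  | _ x ih =>
    intro hx
    by_cases h16 : 16 ≤ x
    · obtain ⟨k, hk, rfl⟩ : ∃ k, 7 ≤ k ∧ x = k + 9 := ⟨x - 9, by omega, by omega⟩
      have h1 := C_step k hk
      have h2 := ih (k+5) (by omega) (by omega)
      have h3 := g_superadd (k+5) 4
      rw [g4_eq] at h3
      linarith
    · interval_cases x <;> (rw [C]; norm_num [g, cc, H_eq, Finset.sum_range_succ])

lemma key_lemma : ∀ l : Multiset ℕ, (∀ x ∈ l, 2 ≤ x) → (l.map C).sum ≤ g l.sum := by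
  intro l
  induction l using Multiset.induction with
  | empty => simp [g, cc]
  | cons x s ih =>
      intro hl
      simp only [Multiset.map_cons, Multiset.sum_cons]
      have h1 : C x ≤ g x := C_le_g x (hl x (Multiset.mem_cons_self x s))
      have h2 : (s.map C).sum ≤ g s.sum := ih fun y hy => hl y (Multiset.mem_cons_of_mem hy)
      calc C x + (s.map C).sum ≤ g x + g s.sum := by linarith
      _ ≤ g (x + s.sum) := g_superadd x s.sum

theorem rule_of_fours (n q r : ℕ) (hn : 6 < n) (hr : r < 4) (hqr : n = 4 * q + r)
    (l : Multiset ℕ) (hl : ∀ x ∈ l, 2 ≤ x) (hsum : l.sum = n) :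
    (l.map C).sum ≤ ((optimalPartition q r).map C).sum := by
  have h1 : (l.map C).sum ≤ g n := hsum ▸ key_lemma l hl
  have h2 : g n = q * (121/49) + cc r := hqr ▸ g_eq q r hr
  refine h1.trans (le_of_eq ?_)
  have cc0 : cc 0 = 0 := by norm_num [cc]
  have cc1 : cc 1 = 125/41 - 121/49 := by norm_num [cc]
  have cc2 : cc 2 = 2*(125/41) - 2*(121/49) := by norm_num [cc]
  have cc3 : cc 3 = 9/5 := by norm_num [cc]
  rw [h2]
  interval_cases r
  · rw [cc0, show optimalPartition q 0 = Multiset.replicate q 4 from rfl,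
      Multiset.map_replicate, Multiset.sum_replicate, nsmul_eq_mul, C4]
    ring
  · have hq : 2 ≤ q := by omega
    rw [cc1, show optimalPartition q 1
        = Multiset.replicate (q-1) 4 + Multiset.replicate 1 5 from rfl,
      Multiset.map_add, Multiset.sum_add, Multiset.map_replicate, Multiset.map_replicate,
      Multiset.sum_replicate, Multiset.sum_replicate, nsmul_eq_mul, nsmul_eq_mul, C4, C5]
    have hc : ((q-1:ℕ):ℝ) = (q:ℝ) - 1 := by
      rw [Nat.cast_sub (by omega : 1 ≤ q)]; norm_num
    rw [hc]; ring
  · have hq : 2 ≤ q := by omega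
    rw [cc2, show optimalPartition q 2
        = Multiset.replicate (q-2) 4 + Multiset.replicate 2 5 from rfl,
      Multiset.map_add, Multiset.sum_add, Multiset.map_replicate, Multiset.map_replicate,
      Multiset.sum_replicate, Multiset.sum_replicate, nsmul_eq_mul, nsmul_eq_mul, C4, C5]
    have hc : ((q-2:ℕ):ℝ) = (q:ℝ) - 2 := by
      rw [Nat.cast_sub (by omega : 2 ≤ q)]; norm_num
    rw [hc]; ring
  · rw [cc3, show optimalPartition q 3 = Multiset.replicate q 4 + {3} from rfl,
      Multiset.map_add, Multiset.sum_add, Multiset.map_replicate, Multiset.sum_replicate,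
      Multiset.map_singleton, Multiset.sum_singleton, nsmul_eq_mul, C4, C3]
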